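/- For ε₀ ∈ (0, 1/2), the approximated ℓ₀ regularization function f_{ε₀} is nondecreasing on [0, 1] and takes values in [0, 1], with f_{ε₀}(0) = 0 and f_{ε₀}(d) = 1 for all d ∈ [2ε₀, 1]. -/
import Mathlib


/-- The cubic blending polynomial `p₃(d) = ½t³ − (3/2)t² + (3/2)t + ½` with
`t = (2d − ε₀)/(3ε₀)`: the unique polynomial of degree at most 3 satisfying
`p₃(ε₀/2) = 1/2`, `p₃′(ε₀/2) = 1/ε₀`, `p₃(2ε₀) = 1`, `p₃′(2ε₀) = 0`. -/
noncomputable def p3 (ε d : ℝ) : ℝ :=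
  (1 / 2) * ((2 * d - ε) / (3 * ε)) ^ 3
    - (3 / 2) * ((2 * d - ε) / (3 * ε)) ^ 2
    + (3 / 2) * ((2 * d - ε) / (3 * ε)) + 1 / 2

/-- The approximated ℓ₀ regularization function `f_{ε₀}`. -/
noncomputable def approxL0 (ε d : ℝ) : ℝ :=
  if d ≤ ε / 2 then d / ε else if d < 2 * ε then p3 ε d else 1

private lemma g_mono {t s : ℝ} (h : t ≤ s) :
    (1/2) * t ^ 3 - (3/2) * t ^ 2 + (3/2) * t + 1/2
      ≤ (1/2) * s ^ 3 - (3/2) * s ^ 2 + (3/2) * s + 1/2 := by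
  nlinarith [sq_nonneg (s - 1), sq_nonneg (t - 1), sq_nonneg (s + t - 2), sq_nonneg (s - t)]

private lemma p3_mono {ε x y : ℝ} (hε : 0 < ε) (h : x ≤ y) : p3 ε x ≤ p3 ε y := by
  have ht : (2 * x - ε) / (3 * ε) ≤ (2 * y - ε) / (3 * ε) := by
    gcongr <;> linarith
  exact g_mono ht

private lemma half_le_p3 {ε d : ℝ} (hε : 0 < ε) (hd : ε / 2 ≤ d) : 1/2 ≤ p3 ε d := by
  have h0 : p3 ε (ε / 2) = 1/2 := by
    unfold p3
    have : (2 * (ε / 2) - ε) / (3 * ε) = 0 := by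
      rw [div_eq_zero_iff]; left; ring
    rw [this]; ring
  rw [← h0]; exact p3_mono hε hd

private lemma p3_le_one {ε d : ℝ} (hε : 0 < ε) (hd : d ≤ 2 * ε) : p3 ε d ≤ 1 := by
  have h1 : p3 ε (2 * ε) = 1 := by
    unfold p3
    have : (2 * (2 * ε) - ε) / (3 * ε) = 1 := by
      rw [div_eq_one_iff_eq (by positivity)]; ring
    rw [this]; ring
  rw [← h1]; exact p3_mono hε hd

theorem approxL0_monotone_and_bounds
    (ε : ℝ) (hε : ε ∈ Set.Ioo (0 : ℝ) (1 / 2)) :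
    MonotoneOn (approxL0 ε) (Set.Icc 0 1)
    ∧ (∀ d ∈ Set.Icc (0 : ℝ) 1, approxL0 ε d ∈ Set.Icc (0 : ℝ) 1)
    ∧ approxL0 ε 0 = 0
    ∧ ∀ d ∈ Set.Icc (2 * ε) 1, approxL0 ε d = 1 := by
  obtain ⟨hε0, hε2⟩ := hε
  refine ⟨?_, ?_, ?_, ?_⟩
  · intro x hx y hy hxy
    unfold approxL0
    have hx12 : ∀ z : ℝ, z ≤ ε / 2 → z / ε ≤ 1 / 2 := fun z hz => by
      rw [div_le_div_iff₀ hε0 (by norm_num)]; linarith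
    split_ifs with h1 h2 h2 h3 h4 h4 h5
    · gcongr
    · exact (hx12 x h1).trans (half_le_p3 hε0 (by linarith))
    · exact (hx12 x h1).trans (by norm_num)
    · linarith
    · exact p3_mono hε0 hxy
    · exact p3_le_one hε0 h3.le
    · linarith
    · linarith
    · exact le_refl _
  · intro d hd
    obtain ⟨hd0, hd1⟩ := hd
    unfold approxL0
    split_ifs with h1 h2
    · constructor
      · positivity
      · rw [div_le_one hε0]; linarith
    · constructor
      · linarith [half_le_p3 hε0 (le_of_not_ge h1)]
      · exact p3_le_one hε0 (le_of_lt h2)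
    · exact ⟨by norm_num, le_refl 1⟩
  · unfold approxL0
    rw [if_pos (by linarith)]
    simp
  · intro d hd
    obtain ⟨hd2, hd1⟩ := hd
    unfold approxL0
    rw [if_neg (by linarith), if_neg (by linarith)]
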